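/- arXiv:1308.4251 — 3 statements merged into one kernel-verified Lean document; each statement's English description precedes it below -/
import Mathlib

section
/- Let $G$ be a connected graph of order $n \geq 3$. Then $rx_3(G) = 2$ if and only if $G = K_5$, or $G$ is a 2-connected graph of order 4, or $G$ has order 3. -/
open SimpleGraph

/-- An edge-coloring `c` is a `k`-rainbow coloring of `G` if every `k`-set of vertices
is contained in a rainbow tree: a subgraph of `G` that is a tree, contains the `k` vertices,
and whose edges receive pairwise distinct colors. -/
def IsRainbowColoring {V : Type*} [Fintype V] (G : SimpleGraph V) {α : Type*}
    (c : Sym2 V → α) (k : ℕ) : Prop :=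
  ∀ S : Finset V, S.card = k →
    ∃ T : G.Subgraph, (↑S : Set V) ⊆ T.verts ∧ T.coe.IsTree ∧ Set.InjOn c T.edgeSet

/-- The `k`-rainbow index of `G`: the minimum number of colors in a `k`-rainbow coloring. -/
noncomputable def rxk {V : Type*} [Fintype V] (G : SimpleGraph V) (k : ℕ) : ℕ :=
  sInf {q | ∃ c : Sym2 V → Fin q, IsRainbowColoring G c k}

/-- A graph is 2-connected if it has at least 3 vertices, is connected, and deleting any
single vertex leaves it connected. -/
def TwoConnected {V : Type*} [Fintype V] (G : SimpleGraph V) : Prop :=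
  3 ≤ Fintype.card V ∧ G.Connected ∧ ∀ v : V, (G.induce {w | w ≠ v}).Connected


lemma builder {V : Type*} [Fintype V] {G : SimpleGraph V} {α : Type*} (c : Sym2 V → α)
    {x u v : V} (hxu : G.Adj x u) (hxv : G.Adj x v) (huv : u ≠ v)
    (hc : c s(x,u) ≠ c s(x,v)) :
    ∃ T : G.Subgraph, T.verts = {u, x, v} ∧ T.coe.IsTree ∧ Set.InjOn c T.edgeSet := by
  classical
  set T : G.Subgraph :=
    { verts := {u, x, v}
      Adj := fun a b => s(a,b) = s(x,u) ∨ s(a,b) = s(x,v)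
      adj_sub := by
        rintro a b (h | h) <;> rw [Sym2.eq_iff] at h <;>
          rcases h with ⟨rfl, rfl⟩ | ⟨rfl, rfl⟩ <;>
          (first | exact hxu | exact hxv | exact hxu.symm | exact hxv.symm)
      edge_vert := by
        rintro a b (h | h) <;> rw [Sym2.eq_iff] at h <;>
          rcases h with ⟨rfl, rfl⟩ | ⟨rfl, rfl⟩ <;> simp
      symm := by
        constructor; intro a b h
        rwa [Sym2.eq_swap] } with hT
  have hE : T.edgeSet = {s(x,u), s(x,v)} := by
    ext e
    induction e using Sym2.ind with
    | _ a b => simp [Subgraph.mem_edgeSet, hT, Set.mem_insert_iff]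
  have hxune : x ≠ u := hxu.ne
  have hxvne : x ≠ v := hxv.ne
  have hedne : s(x,u) ≠ s(x,v) := fun h => huv (Sym2.congr_right.mp h)
  refine ⟨T, rfl, ⟨?_, ?_⟩, ?_⟩
  · -- connected
    rw [connected_iff]
    constructor
    · have hx : x ∈ T.verts := by simp [hT]
      have reach : ∀ a : T.verts, T.coe.Reachable a ⟨x, hx⟩ := by
        rintro ⟨a, ha⟩
        simp only [hT, Set.mem_insert_iff, Set.mem_singleton_iff] at ha
        rcases ha with rfl | rfl | rfl
        · exact (Adj.reachable (by simp [Subgraph.coe_adj, hT, Sym2.eq_swap]))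
        · rfl
        · exact (Adj.reachable (by simp [Subgraph.coe_adj, hT, Sym2.eq_swap]))
      intro a b
      exact (reach a).trans (reach b).symm
    · exact ⟨⟨x, by simp [hT]⟩⟩
  · -- acyclic
    intro a p hp
    have h3 := hp.three_le_length
    have hnodup : p.edges.Nodup := hp.edges_nodup
    have hlist : (p.edges.map (Sym2.map (Subtype.val))).Nodup :=
      hnodup.map (Sym2.map.injective Subtype.val_injective)
    have hmem : ∀ e ∈ p.edges.map (Sym2.map (Subtype.val)),
        e ∈ ({s(x,u), s(x,v)} : Finset (Sym2 V)) := by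
      intro e he
      rw [List.mem_map] at he
      obtain ⟨f, hf, rfl⟩ := he
      have := p.edges_subset_edgeSet hf
      rw [Subgraph.edgeSet_coe] at this
      have : Sym2.map Subtype.val f ∈ T.edgeSet := this
      rw [hE] at this
      simpa using this
    have hcard : (p.edges.map (Sym2.map (Subtype.val))).toFinset.card
        ≤ ({s(x,u), s(x,v)} : Finset (Sym2 V)).card := by
      apply Finset.card_le_card
      intro e he
      exact hmem e (List.mem_toFinset.mp he)
    rw [List.toFinset_card_of_nodup hlist, List.length_map, Walk.length_edges] at hcard
    have : ({s(x,u), s(x,v)} : Finset (Sym2 V)).card ≤ 2 := Finset.card_insert_le _ _ |>.trans (by simp)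
    omega
  · -- InjOn
    rw [hE]
    rintro e1 (rfl | h1) e2 (rfl | h2) hceq
    · rfl
    · rw [Set.mem_singleton_iff] at h2; subst h2; exact absurd hceq hc
    · rw [Set.mem_singleton_iff] at h1; subst h1; exact absurd hceq.symm hc
    · rw [Set.mem_singleton_iff] at h1 h2; rw [h1, h2]


lemma verts_ncard_le {V : Type*} [Fintype V] {G : SimpleGraph V} {α : Type*} [Fintype α]
    (T : G.Subgraph) (c : Sym2 V → α) (hinj : Set.InjOn c T.edgeSet)
    (htree : T.coe.IsTree) : T.verts.ncard ≤ Fintype.card α + 1 := by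
  classical
  haveI : Fintype T.verts := Fintype.ofFinite _
  haveI : Fintype T.coe.edgeSet := Fintype.ofFinite _
  have hcount := htree.card_edgeFinset
  have hinj2 : Function.Injective (fun e : T.coe.edgeSet => c (Sym2.map Subtype.val e.val)) := by
    rintro ⟨e1, he1⟩ ⟨e2, he2⟩ h
    have m1 : Sym2.map Subtype.val e1 ∈ T.edgeSet := by
      rw [← Subgraph.image_coe_edgeSet_coe]; exact ⟨e1, he1, rfl⟩
    have m2 : Sym2.map Subtype.val e2 ∈ T.edgeSet := by
      rw [← Subgraph.image_coe_edgeSet_coe]; exact ⟨e2, he2, rfl⟩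
    have := hinj m1 m2 h
    exact Subtype.ext (Sym2.map.injective Subtype.val_injective this)
  have hle : Fintype.card T.coe.edgeSet ≤ Fintype.card α :=
    Fintype.card_le_of_injective _ hinj2
  rw [edgeFinset_card] at hcount
  have : T.verts.ncard = Fintype.card T.verts := Set.ncard_eq_toFinset_card' T.verts ▸ by
    simp [Set.toFinset_card]
  omega

lemma exists_nbr {V : Type*} {G : SimpleGraph V} {T : G.Subgraph}
    (hconn : T.coe.Connected) {x y : V} (hx : x ∈ T.verts) (hy : y ∈ T.verts)
    (hxy : x ≠ y) : ∃ p, T.Adj x p := by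
  obtain ⟨w⟩ := hconn.preconnected ⟨x, hx⟩ ⟨y, hy⟩
  cases w with
  | nil => exact absurd rfl hxy
  | cons h _ => exact ⟨_, (Subgraph.coe_adj _ _ _) ▸ h⟩

lemma center_of_rainbow {V : Type*} [Fintype V] {G : SimpleGraph V} {c : Sym2 V → Fin 2}
    (h : IsRainbowColoring G c 3) {u v w : V} (huv : u ≠ v) (huw : u ≠ w) (hvw : v ≠ w) :
    (G.Adj u v ∧ G.Adj u w ∧ c s(u,v) ≠ c s(u,w)) ∨
    (G.Adj v u ∧ G.Adj v w ∧ c s(v,u) ≠ c s(v,w)) ∨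
    (G.Adj w u ∧ G.Adj w v ∧ c s(w,u) ≠ c s(w,v)) := by
  classical
  have hS3 : ({u,v,w} : Finset V).card = 3 := by
    rw [Finset.card_insert_of_notMem (by simp [huv, huw]),
        Finset.card_insert_of_notMem (by simp [hvw]), Finset.card_singleton]
  obtain ⟨T, hsub, htree, hinj⟩ := h {u,v,w} hS3
  have hle := verts_ncard_le T c hinj htree
  have hverts : (↑({u,v,w} : Finset V) : Set V) = T.verts := by
    apply Set.eq_of_subset_of_ncard_le hsub
    rw [Set.ncard_coe_finset, hS3]
    simpa using hle
  have hmemS : ∀ z, z ∈ T.verts → z = u ∨ z = v ∨ z = w := by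
    intro z hz
    rw [← hverts] at hz
    simpa using hz
  have center : ∀ a b d : V, T.Adj a b → T.Adj a d → b ≠ d →
      G.Adj a b ∧ G.Adj a d ∧ c s(a,b) ≠ c s(a,d) := by
    intro a b d h1 h2 hbd
    exact ⟨T.adj_sub h1, T.adj_sub h2, fun hcc => hbd (Sym2.congr_right.mp
      (hinj (Subgraph.mem_edgeSet.mpr h1) (Subgraph.mem_edgeSet.mpr h2) hcc))⟩
  have hu : u ∈ T.verts := hsub (by simp)
  have hv : v ∈ T.verts := hsub (by simp)
  have hw : w ∈ T.verts := hsub (by simp)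
  obtain ⟨p, hp⟩ := exists_nbr htree.isConnected hu hv huv
  obtain ⟨q, hq⟩ := exists_nbr htree.isConnected hv hu huv.symm
  have hpne : p ≠ u := fun hh => (T.adj_sub hp).ne (hh ▸ rfl)
  have hqne : q ≠ v := fun hh => (T.adj_sub hq).ne (hh ▸ rfl)
  have hpmem := hmemS p hp.snd_mem
  have hqmem := hmemS q hq.snd_mem
  rcases hpmem with h1 | h1 | h1 <;> rw [h1] at hp
  · exact absurd rfl (h1 ▸ hpne)
  · -- T.Adj u v
    rcases hqmem with h2 | h2 | h2 <;> rw [h2] at hq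
    · -- T.Adj v u : same edge; use w's neighbor
      obtain ⟨r, hr⟩ := exists_nbr htree.isConnected hw hu (Ne.symm huw)
      have hrne : r ≠ w := fun hh => (T.adj_sub hr).ne (hh ▸ rfl)
      rcases (hmemS r hr.snd_mem) with h3 | h3 | h3 <;> rw [h3] at hr
      · exact Or.inl (center u v w hp hr.symm hvw)
      · exact Or.inr (Or.inl (center v u w hp.symm hr.symm huw))
      · exact absurd rfl (h3 ▸ hrne)
    · exact absurd rfl (h2 ▸ hqne)
    · exact Or.inr (Or.inl (center v u w hp.symm hq huw))
  · -- T.Adj u w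
    rcases hqmem with h2 | h2 | h2 <;> rw [h2] at hq
    · exact Or.inl (center u v w hq.symm hp hvw)
    · exact absurd rfl (h2 ▸ hqne)
    · exact Or.inr (Or.inr (center w u v hp.symm hq.symm huv))

lemma rxk_eq_two_iff {V : Type*} [Fintype V] (G : SimpleGraph V)
    (hn : 3 ≤ Fintype.card V) :
    rxk G 3 = 2 ↔ ∃ c : Sym2 V → Fin 2, IsRainbowColoring G c 3 := by
  classical
  constructor
  · intro h
    rcases Set.eq_empty_or_nonempty {q | ∃ c : Sym2 V → Fin q, IsRainbowColoring G c 3} with he | hne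
    · exfalso
      rw [rxk, he, Nat.sInf_empty] at h
      exact absurd h (by norm_num)
    · have := Nat.sInf_mem hne
      rw [← rxk] at this
      rw [h] at this
      exact this
  · rintro hc2
    have h2mem : 2 ∈ {q | ∃ c : Sym2 V → Fin q, IsRainbowColoring G c 3} := hc2
    have hlb : ∀ m ∈ {q | ∃ c : Sym2 V → Fin q, IsRainbowColoring G c 3}, 2 ≤ m := by
      rintro m ⟨c, hc⟩
      by_contra hlt
      push_neg at hlt
      interval_cases m
      · -- zero colors
        have : Nonempty V := Fintype.card_pos_iff.mp (by omega)
        obtain ⟨v⟩ := this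
        exact (c s(v,v)).elim0
      · -- one color
        obtain ⟨S, -, hS3⟩ := Finset.exists_subset_card_eq (s := (Finset.univ : Finset V)) (n := 3)
          (by simpa using hn)
        obtain ⟨T, hsub, htree, hinj⟩ := hc S hS3
        have hle := verts_ncard_le T c hinj htree
        have : (↑S : Set V).ncard ≤ T.verts.ncard :=
          Set.ncard_le_ncard hsub (Set.toFinite _)
        rw [Set.ncard_coe_finset, hS3] at this
        simp only [Fintype.card_fin] at hle
        omega
    exact le_antisymm (Nat.sInf_le h2mem) (hlb _ (Nat.sInf_mem ⟨2, h2mem⟩))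

section Forward
variable {V : Type*} [Fintype V] {G : SimpleGraph V} {c : Sym2 V → Fin 2}

/-- If `a b` is a non-edge, every third vertex sees both with distinct colors. -/
lemma star_lemma (h : IsRainbowColoring G c 3) {a b x : V} (hab : a ≠ b)
    (hxa : x ≠ a) (hxb : x ≠ b) (hnadj : ¬ G.Adj a b) :
    G.Adj x a ∧ G.Adj x b ∧ c s(x,a) ≠ c s(x,b) := by
  rcases center_of_rainbow h hab (Ne.symm hxa) (Ne.symm hxb) with
    ⟨h1, -, -⟩ | ⟨h1, -, -⟩ | h1
  · exact absurd h1 hnadj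
  · exact absurd h1.symm hnadj
  · exact h1

/-- Toward: if `a b` is a non-edge, the colors `c s(x,a)` are pairwise distinct
for `x` outside `{a,b}`. -/
lemma colors_ne (h : IsRainbowColoring G c 3) {a b x y : V} (hab : a ≠ b)
    (hnadj : ¬ G.Adj a b) (hxa : x ≠ a) (hxb : x ≠ b) (hya : y ≠ a) (hyb : y ≠ b)
    (hxy : x ≠ y) : c s(x,a) ≠ c s(y,a) := by
  by_cases hadjxy : G.Adj x y
  · intro heq
    obtain ⟨-, -, hx'⟩ := star_lemma h hab hxa hxb hnadj
    obtain ⟨-, -, hy'⟩ := star_lemma h hab hya hyb hnadj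
    have hxbyb : c s(x,b) = c s(y,b) := by
      have : ∀ p q r s : Fin 2, p ≠ q → r ≠ s → p = r → q = s := by decide
      exact this _ _ _ _ hx' hy' heq
    -- triple {x, y, a}
    have h1 : c s(x,y) ≠ c s(x,a) := by
      rcases center_of_rainbow h hxy hxa hya with ⟨-, -, hh⟩ | ⟨-, -, hh⟩ | ⟨-, -, hh⟩
      · exact hh
      · rw [Sym2.eq_swap (a := y) (b := x)] at hh
        rw [heq]; exact hh
      · exfalso
        rw [Sym2.eq_swap (a := a) (b := x), Sym2.eq_swap (a := a) (b := y)] at hh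
        exact hh heq
    -- triple {x, y, b}
    have h2 : c s(x,y) ≠ c s(x,b) := by
      rcases center_of_rainbow h hxy hxb hyb with ⟨-, -, hh⟩ | ⟨-, -, hh⟩ | ⟨-, -, hh⟩
      · exact hh
      · rw [Sym2.eq_swap (a := y) (b := x)] at hh
        rw [hxbyb]; exact hh
      · exfalso
        rw [Sym2.eq_swap (a := b) (b := x), Sym2.eq_swap (a := b) (b := y)] at hh
        exact hh hxbyb
    have : ∀ p q r : Fin 2, p ≠ q → p ≠ r → q ≠ r → False := by decide
    exact this _ _ _ h1 h2 hx'
  · -- x y is a non-edge; use star on it with third vertex a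
    obtain ⟨-, -, hh⟩ := star_lemma h hxy (Ne.symm hxa) (Ne.symm hya) hadjxy
    rw [Sym2.eq_swap (a := a) (b := x), Sym2.eq_swap (a := a) (b := y)] at hh
    exact hh

/-- No rainbow 2-coloring exists when there is a non-edge and at least 5 vertices. -/
lemma no_coloring_of_nonedge (h : IsRainbowColoring G c 3) {a b : V} (hab : a ≠ b)
    (hnadj : ¬ G.Adj a b) (h5 : 5 ≤ Fintype.card V) : False := by
  classical
  have hcard : 3 ≤ (Finset.univ \ {a, b} : Finset V).card := by
    have : ({a, b} : Finset V).card ≤ 2 := Finset.card_insert_le _ _ |>.trans (by simp)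
    have := Finset.card_sdiff_of_subset (Finset.subset_univ ({a,b} : Finset V))
    rw [Finset.card_univ] at this
    omega
  obtain ⟨S, hSsub, hS3⟩ := Finset.exists_subset_card_eq (n := 3) hcard
  obtain ⟨x, y, z, hxy, hxz, hyz, rfl⟩ := Finset.card_eq_three.mp hS3
  have hmem : ∀ t ∈ ({x, y, z} : Finset V), t ≠ a ∧ t ≠ b := by
    intro t ht
    have := hSsub ht
    simp only [Finset.mem_sdiff, Finset.mem_insert, Finset.mem_singleton] at this
    exact ⟨fun hh => this.2 (Or.inl hh), fun hh => this.2 (Or.inr hh)⟩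
  obtain ⟨hxa, hxb⟩ := hmem x (by simp)
  obtain ⟨hya, hyb⟩ := hmem y (by simp)
  obtain ⟨hza, hzb⟩ := hmem z (by simp)
  have h1 := colors_ne h hab hnadj hxa hxb hya hyb hxy
  have h2 := colors_ne h hab hnadj hxa hxb hza hzb hxz
  have h3 := colors_ne h hab hnadj hya hyb hza hzb hyz
  have : ∀ p q r : Fin 2, p ≠ q → p ≠ r → q ≠ r → False := by decide
  exact this _ _ _ h1 h2 h3

/-- No rainbow 2-coloring exists when the graph is complete with at least 6 vertices. -/
lemma no_coloring_of_complete (h : IsRainbowColoring G c 3) (h6 : 6 ≤ Fintype.card V) :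
    False := by
  classical
  have : Nonempty V := Fintype.card_pos_iff.mp (by omega)
  obtain ⟨v0⟩ := this
  set t : Finset V := Finset.univ.erase v0 with ht
  have htcard : 5 ≤ t.card := by
    rw [ht, Finset.card_erase_of_mem (Finset.mem_univ _), Finset.card_univ]; omega
  have hmaps : ∀ a ∈ t, (fun x => c s(v0, x)) a ∈ (Finset.univ : Finset (Fin 2)) := by
    intro a _; exact Finset.mem_univ _
  obtain ⟨γ, -, hγ⟩ := Finset.exists_lt_card_fiber_of_mul_lt_card_of_maps_to hmaps
    (by simp; omega : (Finset.univ : Finset (Fin 2)).card * 2 < t.card)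
  obtain ⟨S, hSsub, hS3⟩ := Finset.exists_subset_card_eq (n := 3) hγ
  obtain ⟨x, y, z, hxy, hxz, hyz, rfl⟩ := Finset.card_eq_three.mp hS3
  have hfact : ∀ s ∈ ({x, y, z} : Finset V), s ≠ v0 ∧ c s(v0, s) = γ := by
    intro s hs
    have := hSsub hs
    simp only [Finset.mem_filter, ht, Finset.mem_erase] at this
    exact ⟨this.1.1, this.2⟩
  obtain ⟨hx0, hxγ⟩ := hfact x (by simp)
  obtain ⟨hy0, hyγ⟩ := hfact y (by simp)
  obtain ⟨hz0, hzγ⟩ := hfact z (by simp)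
  -- find a monochromatic triangle
  have mono : ∃ p q r : V, p ≠ q ∧ p ≠ r ∧ q ≠ r ∧
      c s(p,q) = c s(p,r) ∧ c s(p,q) = c s(q,r) := by
    by_cases h1 : c s(x,y) = γ
    · exact ⟨v0, x, y, Ne.symm hx0, Ne.symm hy0, hxy, by rw [hxγ, hyγ], by rw [hxγ, h1]⟩
    · by_cases h2 : c s(x,z) = γ
      · exact ⟨v0, x, z, Ne.symm hx0, Ne.symm hz0, hxz, by rw [hxγ, hzγ], by rw [hxγ, h2]⟩
      · by_cases h3 : c s(y,z) = γ
        · exact ⟨v0, y, z, Ne.symm hy0, Ne.symm hz0, hyz, by rw [hyγ, hzγ], by rw [hyγ, h3]⟩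
        · refine ⟨x, y, z, hxy, hxz, hyz, ?_, ?_⟩
          · have : ∀ p q r : Fin 2, p ≠ r → q ≠ r → p = q := by decide
            exact this _ _ _ h1 h2
          · have : ∀ p q r : Fin 2, p ≠ r → q ≠ r → p = q := by decide
            exact this _ _ _ h1 h3
  obtain ⟨p, q, r, hpq, hpr, hqr, m1, m2⟩ := mono
  rcases center_of_rainbow h hpq hpr hqr with ⟨-, -, hh⟩ | ⟨-, -, hh⟩ | ⟨-, -, hh⟩
  · exact hh m1
  · rw [Sym2.eq_swap (a := q) (b := p)] at hh
    exact hh m2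
  · rw [Sym2.eq_swap (a := r) (b := p), Sym2.eq_swap (a := r) (b := q)] at hh
    apply hh
    rw [← m1, m2]

/-- Every vertex has at most one non-neighbor. -/
lemma matching_prop (h : IsRainbowColoring G c 3) {x a b : V} (hxa : x ≠ a) (hxb : x ≠ b)
    (hab : a ≠ b) (hna : ¬ G.Adj x a) : G.Adj x b := by
  by_contra hnb
  obtain ⟨h1, -, -⟩ := star_lemma h hxa (Ne.symm hxb) (Ne.symm hab) hna
  exact hnb h1.symm
end Forward

lemma fourth_vertex {V : Type*} [Fintype V] (h4 : 4 ≤ Fintype.card V) (a b c : V) :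
    ∃ d : V, d ≠ a ∧ d ≠ b ∧ d ≠ c := by
  classical
  have h1 : ({a, b, c} : Finset V).card ≤ 3 := by
    have g1 := Finset.card_insert_le a ({b, c} : Finset V)
    have g2 := Finset.card_insert_le b ({c} : Finset V)
    simp only [Finset.card_singleton] at g1 g2
    omega
  have : 0 < (Finset.univ \ {a, b, c} : Finset V).card := by
    rw [Finset.card_sdiff_of_subset (Finset.subset_univ _), Finset.card_univ]; omega
  obtain ⟨d, hd⟩ := Finset.card_pos.mp this
  simp only [Finset.mem_sdiff, Finset.mem_insert, Finset.mem_singleton] at hd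
  push_neg at hd
  exact ⟨d, hd.2⟩

lemma twoConnected_of_matching {V : Type*} [Fintype V] {G : SimpleGraph V} (hG : G.Connected)
    (h4 : Fintype.card V = 4)
    (M : ∀ x a b : V, x ≠ a → x ≠ b → a ≠ b → ¬G.Adj x a → G.Adj x b) : TwoConnected G := by
  refine ⟨by omega, hG, fun v => ?_⟩
  rw [connected_iff]
  constructor
  · rintro ⟨p, hp⟩ ⟨q, hq⟩
    simp only [Set.mem_setOf_eq] at hp hq
    by_cases hpq : p = q
    · subst hpq; rfl
    · by_cases hadj : G.Adj p q
      · exact Adj.reachable (by simp [hadj])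
      · obtain ⟨z, hzv, hzp, hzq⟩ := fourth_vertex (by omega) v p q
        have h1 : G.Adj p z := M p q z hpq (Ne.symm hzp) (Ne.symm hzq) hadj
        have h2 : G.Adj q z := M q p z (Ne.symm hpq) (Ne.symm hzq) (Ne.symm hzp)
          (fun hh => hadj hh.symm)
        have r1 : (G.induce {w | w ≠ v}).Adj ⟨p, hp⟩ ⟨z, hzv⟩ := by simp [h1]
        have r2 : (G.induce {w | w ≠ v}).Adj ⟨z, hzv⟩ ⟨q, hq⟩ := by simp [h2.symm]
        exact (r1.reachable).trans r2.reachable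
  · obtain ⟨d, hd, -, -⟩ := fourth_vertex (by omega) v v v
    exact ⟨⟨d, hd⟩⟩

/-- In the four-vertex case, a TwoConnected graph has the matching property. -/
lemma matching_of_twoConnected {V : Type*} [Fintype V] {G : SimpleGraph V}
    (h4 : Fintype.card V = 4) (h2 : TwoConnected G) :
    ∀ x a b : V, x ≠ a → x ≠ b → a ≠ b → ¬G.Adj x a → G.Adj x b := by
  classical
  intro x a b hxa hxb hab hna
  by_contra hnb
  obtain ⟨d, hdx, hda, hdb⟩ := fourth_vertex (by omega) x a b
  have hconn := h2.2.2 d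
  have huniv : (Finset.univ : Finset V) = {x, a, b, d} := by
    symm
    apply Finset.eq_univ_of_card
    rw [h4]
    rw [Finset.card_insert_of_notMem (by simp [hxa, hxb, Ne.symm hdx]),
        Finset.card_insert_of_notMem (by simp [hab, Ne.symm hda]),
        Finset.card_insert_of_notMem (by simp [Ne.symm hdb]), Finset.card_singleton]
  have hx : x ∈ {w | w ≠ d} := Ne.symm hdx
  have ha : a ∈ {w | w ≠ d} := Ne.symm hda
  obtain ⟨wk⟩ := hconn.preconnected ⟨x, hx⟩ ⟨a, ha⟩
  cases wk with
  | nil => exact absurd rfl hxa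
  | cons hadj rest =>
    rename_i m
    have hGadj : G.Adj x m.val := by simpa using hadj
    have hmmem : m.val ∈ (Finset.univ : Finset V) := Finset.mem_univ _
    rw [huniv] at hmmem
    simp only [Finset.mem_insert, Finset.mem_singleton] at hmmem
    rcases hmmem with h | h | h | h
    · exact G.irrefl (h ▸ hGadj)
    · exact hna (h ▸ hGadj)
    · exact hnb (h ▸ hGadj)
    · exact m.prop (h)

lemma rainbow_step {V : Type*} [Fintype V] {G : SimpleGraph V} {α : Type*} (c : Sym2 V → α)
    {x u v : V} (hxu : G.Adj x u) (hxv : G.Adj x v) (huv : u ≠ v)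
    (hc : c s(x,u) ≠ c s(x,v)) {S : Finset V} (hS : (↑S : Set V) ⊆ {u, x, v}) :
    ∃ T : G.Subgraph, (↑S : Set V) ⊆ T.verts ∧ T.coe.IsTree ∧ Set.InjOn c T.edgeSet := by
  obtain ⟨T, hv, ht, hi⟩ := builder c hxu hxv huv hc
  exact ⟨T, by rw [hv]; exact hS, ht, hi⟩

lemma exists_nbr' {V : Type*} {G : SimpleGraph V} (hG : G.Connected) {x y : V}
    (hxy : x ≠ y) : ∃ p, G.Adj x p := by
  obtain ⟨w⟩ := hG.preconnected x y
  cases w with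
  | nil => exact absurd rfl hxy
  | cons h _ => exact ⟨_, h⟩

lemma exists_coloring_card3 {V : Type*} [Fintype V] {G : SimpleGraph V} (hG : G.Connected)
    (h3 : Fintype.card V = 3) : ∃ c : Sym2 V → Fin 2, IsRainbowColoring G c 3 := by
  classical
  obtain ⟨a, b, d, hab, had, hbd, huniv⟩ := Finset.card_eq_three.mp
    (by rw [Finset.card_univ, h3] : (Finset.univ : Finset V).card = 3)
  have hmem : ∀ t : V, t = a ∨ t = b ∨ t = d := by
    intro t
    have : t ∈ (Finset.univ : Finset V) := Finset.mem_univ _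
    rw [huniv] at this
    simpa using this
  have key : ∃ x y z : V, G.Adj x y ∧ G.Adj x z ∧ y ≠ z ∧ (∀ t : V, t = y ∨ t = x ∨ t = z) := by
    obtain ⟨n1, hn1⟩ := exists_nbr' hG hab
    have hn1ne : n1 ≠ a := fun h => G.irrefl (h ▸ hn1)
    rcases hmem n1 with h | h | h
    · exact absurd h hn1ne
    · -- G.Adj a b
      rw [h] at hn1
      obtain ⟨m, hm⟩ := exists_nbr' hG (Ne.symm had)
      have hmne : m ≠ d := fun h => G.irrefl (h ▸ hm)
      rcases hmem m with h | h | h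
      · rw [h] at hm
        exact ⟨a, b, d, hn1, hm.symm, hbd, fun t => by rcases hmem t with h|h|h <;> tauto⟩
      · rw [h] at hm
        exact ⟨b, a, d, hn1.symm, hm.symm, had, fun t => by rcases hmem t with h|h|h <;> tauto⟩
      · exact absurd h hmne
    · -- G.Adj a d
      rw [h] at hn1
      obtain ⟨m, hm⟩ := exists_nbr' hG (Ne.symm hab)
      have hmne : m ≠ b := fun h => G.irrefl (h ▸ hm)
      rcases hmem m with h | h | h
      · rw [h] at hm
        exact ⟨a, d, b, hn1, hm.symm, Ne.symm hbd, fun t => by rcases hmem t with h|h|h <;> tauto⟩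
      · exact absurd h hmne
      · rw [h] at hm
        exact ⟨d, a, b, hn1.symm, hm.symm, hab, fun t => by rcases hmem t with h|h|h <;> tauto⟩
  obtain ⟨x, y, z, hxy, hxz, hyz, hcov⟩ := key
  refine ⟨fun e => if e = s(x,y) then 0 else 1, ?_⟩
  intro S hS
  have hc : (fun e => if e = s(x,y) then (0 : Fin 2) else 1) s(x,y) ≠
      (fun e => if e = s(x,y) then (0 : Fin 2) else 1) s(x,z) := by
    simp only [if_pos rfl]
    rw [if_neg (fun h => hyz (Sym2.congr_right.mp h).symm)]
    decide
  apply rainbow_step _ hxy hxz hyz hc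
  intro t _
  rcases hcov t with h|h|h <;> simp [h]

lemma center_case {V : Type*} [Fintype V] {G : SimpleGraph V} (c : Sym2 V → Fin 2) {S : Finset V}
    (hS3 : S.card = 3) {e₁ e₂ : V} (he : G.Adj e₁ e₂) (h1S : e₁ ∈ S) (h2S : e₂ ∈ S)
    (hcol0 : c s(e₁,e₂) = 0)
    (hcol1 : ∀ t, t ≠ e₁ → t ≠ e₂ → c s(e₁,t) = 1 ∧ c s(e₂,t) = 1)
    (M : ∀ x a b : V, x ≠ a → x ≠ b → a ≠ b → ¬G.Adj x a → G.Adj x b) :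
    ∃ T : G.Subgraph, (↑S : Set V) ⊆ T.verts ∧ T.coe.IsTree ∧ Set.InjOn c T.edgeSet := by
  classical
  have hne : e₁ ≠ e₂ := he.ne
  obtain ⟨t, htS, ht1, ht2⟩ : ∃ t ∈ S, t ≠ e₁ ∧ t ≠ e₂ := by
    by_contra hcon
    push_neg at hcon
    have hsub : S ⊆ {e₁, e₂} := by
      intro s hs
      simp only [Finset.mem_insert, Finset.mem_singleton]
      by_cases h : s = e₁
      · exact Or.inl h
      · exact Or.inr (hcon s hs h)
    have hc1 := Finset.card_le_card hsub
    have hc2 : ({e₁, e₂} : Finset V).card ≤ 2 := Finset.card_insert_le _ _ |>.trans (by simp)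
    omega
  have hSeq : ({e₁, e₂, t} : Finset V) = S := by
    apply Finset.eq_of_subset_of_card_le
    · intro s hs
      simp only [Finset.mem_insert, Finset.mem_singleton] at hs
      rcases hs with rfl | rfl | rfl <;> assumption
    · rw [hS3, Finset.card_insert_of_notMem (by simp [hne, Ne.symm ht1]),
        Finset.card_insert_of_notMem (by simp [Ne.symm ht2]), Finset.card_singleton]
  have hSsub : ∀ (A : Set V), ({e₁, e₂, t} : Set V) ⊆ A → (↑S : Set V) ⊆ A := by
    intro A hA
    rw [← hSeq]
    intro s hs
    apply hA
    simpa using hs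
  by_cases hadj : G.Adj e₁ t
  · have hcolt := (hcol1 t ht1 ht2).1
    apply rainbow_step c he hadj (fun h => ht2 h.symm)
      (by rw [hcol0, hcolt]; decide)
    apply hSsub
    intro s hs
    simp only [Set.mem_insert_iff, Set.mem_singleton_iff] at hs ⊢
    tauto
  · have hadj2 : G.Adj e₂ t := (M t e₁ e₂ ht1 ht2 hne (fun h => hadj h.symm)).symm
    have hcolt := (hcol1 t ht1 ht2).2
    apply rainbow_step c he.symm hadj2 (fun h => ht1 h.symm)
      (by rw [Sym2.eq_swap (a := e₂) (b := e₁), hcol0, hcolt]; decide)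
    apply hSsub
    intro s hs
    simp only [Set.mem_insert_iff, Set.mem_singleton_iff] at hs ⊢
    tauto

lemma four_case {V : Type*} [Fintype V] {G : SimpleGraph V} (h4 : Fintype.card V = 4)
    (M : ∀ x a b : V, x ≠ a → x ≠ b → a ≠ b → ¬G.Adj x a → G.Adj x b)
    (p₁ p₂ q₁ q₂ : V)
    (d12 : p₁ ≠ p₂) (d13 : p₁ ≠ q₁) (d14 : p₁ ≠ q₂) (d23 : p₂ ≠ q₁) (d24 : p₂ ≠ q₂)
    (d34 : q₁ ≠ q₂) (hp : G.Adj p₁ p₂) (hq : G.Adj q₁ q₂) :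
    ∃ c : Sym2 V → Fin 2, IsRainbowColoring G c 3 := by
  classical
  set c : Sym2 V → Fin 2 :=
    fun e => if e = s(p₁,p₂) ∨ e = s(q₁,q₂) then 0 else 1 with hcdef
  have hcp : c s(p₁,p₂) = 0 := if_pos (Or.inl rfl)
  have hcq : c s(q₁,q₂) = 0 := if_pos (Or.inr rfl)
  have hcolp : ∀ t, t ≠ p₁ → t ≠ p₂ → c s(p₁,t) = 1 ∧ c s(p₂,t) = 1 := by
    intro t h1 h2
    constructor
    · apply if_neg
      rintro (h | h) <;> rw [Sym2.eq_iff] at h <;>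
        rcases h with ⟨h3, h4⟩ | ⟨h3, h4⟩ <;> simp_all
    · apply if_neg
      rintro (h | h) <;> rw [Sym2.eq_iff] at h <;>
        rcases h with ⟨h3, h4⟩ | ⟨h3, h4⟩ <;> simp_all
  have hcolq : ∀ t, t ≠ q₁ → t ≠ q₂ → c s(q₁,t) = 1 ∧ c s(q₂,t) = 1 := by
    intro t h1 h2
    constructor
    · apply if_neg
      rintro (h | h) <;> rw [Sym2.eq_iff] at h <;>
        rcases h with ⟨h3, h4⟩ | ⟨h3, h4⟩ <;> simp_all
    · apply if_neg
      rintro (h | h) <;> rw [Sym2.eq_iff] at h <;>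
        rcases h with ⟨h3, h4⟩ | ⟨h3, h4⟩ <;> simp_all
  refine ⟨c, ?_⟩
  intro S hS3
  obtain ⟨w, hw⟩ : ∃ w : V, w ∉ S := by
    by_contra hcon
    push_neg at hcon
    have : (Finset.univ : Finset V) ⊆ S := fun s _ => hcon s
    have := Finset.card_le_card this
    rw [Finset.card_univ, h4, hS3] at this
    omega
  have hmemS : ∀ s : V, s ≠ w → s ∈ S := by
    have hsub : S ⊆ Finset.univ.erase w := by
      intro s hs
      exact Finset.mem_erase.mpr ⟨fun h => hw (h ▸ hs), Finset.mem_univ _⟩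
    have hcard : (Finset.univ.erase w).card ≤ S.card := by
      rw [Finset.card_erase_of_mem (Finset.mem_univ _), Finset.card_univ, h4, hS3]
    have := Finset.eq_of_subset_of_card_le hsub hcard
    intro s hsw
    rw [this]
    exact Finset.mem_erase.mpr ⟨hsw, Finset.mem_univ _⟩
  have hcov : ∀ t : V, t = p₁ ∨ t = p₂ ∨ t = q₁ ∨ t = q₂ := by
    intro t
    have huniv : (Finset.univ : Finset V) = {p₁, p₂, q₁, q₂} := by
      symm
      apply Finset.eq_univ_of_card
      rw [h4, Finset.card_insert_of_notMem (by simp [d12, d13, d14]),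
          Finset.card_insert_of_notMem (by simp [d23, d24]),
          Finset.card_insert_of_notMem (by simp [d34]), Finset.card_singleton]
    have ht : t ∈ (Finset.univ : Finset V) := Finset.mem_univ _
    rw [huniv] at ht
    simpa using ht
  rcases hcov w with rfl | rfl | rfl | rfl
  · exact center_case c hS3 hq (hmemS _ (Ne.symm d13)) (hmemS _ (Ne.symm d14)) hcq hcolq M
  · exact center_case c hS3 hq (hmemS _ (Ne.symm d23)) (hmemS _ (Ne.symm d24)) hcq hcolq M
  · exact center_case c hS3 hp (hmemS _ d13) (hmemS _ d23) hcp hcolp M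
  · exact center_case c hS3 hp (hmemS _ d14) (hmemS _ d24) hcp hcolp M

lemma exists_coloring_card4 {V : Type*} [Fintype V] {G : SimpleGraph V}
    (h4 : Fintype.card V = 4)
    (M : ∀ x a b : V, x ≠ a → x ≠ b → a ≠ b → ¬G.Adj x a → G.Adj x b) :
    ∃ c : Sym2 V → Fin 2, IsRainbowColoring G c 3 := by
  classical
  have : Nonempty V := Fintype.card_pos_iff.mp (by omega)
  obtain ⟨a⟩ := this
  have hec : (Finset.univ.erase a).card = 3 := by
    rw [Finset.card_erase_of_mem (Finset.mem_univ _), Finset.card_univ, h4]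
  obtain ⟨b, cc, d, hbc, hbd, hcd, heq⟩ := Finset.card_eq_three.mp hec
  have hmem : ∀ t, t ∈ ({b, cc, d} : Finset V) → t ≠ a := by
    intro t ht
    rw [← heq] at ht
    exact (Finset.mem_erase.mp ht).1
  have hba : b ≠ a := hmem b (by simp)
  have hca : cc ≠ a := hmem cc (by simp)
  have hda : d ≠ a := hmem d (by simp)
  by_cases h1 : G.Adj a b ∧ G.Adj cc d
  · exact four_case h4 M a b cc d (Ne.symm hba) (Ne.symm hca) (Ne.symm hda) hbc hbd hcd
      h1.1 h1.2
  · have key : G.Adj a cc ∧ G.Adj b d := by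
      rcases not_and_or.mp h1 with hnab | hncd
      · exact ⟨M a b cc (Ne.symm hba) (Ne.symm hca) hbc hnab,
          M b a d hba hbd (Ne.symm hda) (fun h => hnab h.symm)⟩
      · exact ⟨(M cc d a hcd hca hda hncd).symm,
          (M d cc b (Ne.symm hcd) (Ne.symm hbd) (Ne.symm hbc) (fun h => hncd h.symm)).symm⟩
    exact four_case h4 M a cc b d (Ne.symm hca) (Ne.symm hba) (Ne.symm hda) (Ne.symm hbc)
      hcd hbd key.1 key.2

lemma exists_coloring_K5 {V : Type*} [Fintype V] {G : SimpleGraph V}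
    (e : G ≃g completeGraph (Fin 5)) : ∃ c : Sym2 V → Fin 2, IsRainbowColoring G c 3 := by
  classical
  set f : Fin 5 → Fin 5 → Fin 2 := fun i j => if i - j = 1 ∨ j - i = 1 then 0 else 1 with hf
  have hsymm : ∀ i j, f i j = f j i := by decide
  set c₀ : Sym2 (Fin 5) → Fin 2 := Sym2.lift ⟨f, hsymm⟩ with hc₀
  have hdec : ∀ i j k : Fin 5, i ≠ j → i ≠ k → j ≠ k →
      f i j ≠ f i k ∨ f j i ≠ f j k ∨ f k i ≠ f k j := by decide
  have hadj : ∀ x y : V, x ≠ y → G.Adj x y := by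
    intro x y hxy
    rw [← e.map_adj_iff]
    exact (top_adj _ _).mpr (fun h => hxy (e.toEquiv.injective h))
  refine ⟨fun s => c₀ (Sym2.map e.toEquiv s), ?_⟩
  intro S hS
  obtain ⟨x, y, z, hxy, hxz, hyz, rfl⟩ := Finset.card_eq_three.mp hS
  have ceq : ∀ a b : V, (fun s => c₀ (Sym2.map e.toEquiv s)) s(a,b) =
      f (e.toEquiv a) (e.toEquiv b) := by
    intro a b
    simp only [Sym2.map_pair_eq, hc₀, Sym2.lift_mk]
  have key := hdec (e.toEquiv x) (e.toEquiv y) (e.toEquiv z)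
    (e.toEquiv.injective.ne hxy) (e.toEquiv.injective.ne hxz) (e.toEquiv.injective.ne hyz)
  have hsub1 : (↑({x, y, z} : Finset V) : Set V) ⊆ ({y, x, z} : Set V) := by
    intro s hs; simp only [Finset.coe_insert, Finset.coe_singleton, Set.mem_insert_iff,
      Set.mem_singleton_iff] at hs ⊢; tauto
  have hsub2 : (↑({x, y, z} : Finset V) : Set V) ⊆ ({x, y, z} : Set V) := by
    intro s hs; simp only [Finset.coe_insert, Finset.coe_singleton, Set.mem_insert_iff,
      Set.mem_singleton_iff] at hs ⊢; tauto
  have hsub3 : (↑({x, y, z} : Finset V) : Set V) ⊆ ({x, z, y} : Set V) := by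
    intro s hs; simp only [Finset.coe_insert, Finset.coe_singleton, Set.mem_insert_iff,
      Set.mem_singleton_iff] at hs ⊢; tauto
  rcases key with hk | hk | hk
  · exact rainbow_step _ (hadj x y hxy) (hadj x z hxz) hyz
      (by simp only [Sym2.map_pair_eq, hc₀, Sym2.lift_mk]; exact hk) hsub1
  · exact rainbow_step _ (hadj y x (Ne.symm hxy)) (hadj y z hyz) hxz
      (by simp only [Sym2.map_pair_eq, hc₀, Sym2.lift_mk]; exact hk) hsub2
  · exact rainbow_step _ (hadj z x (Ne.symm hxz)) (hadj z y (Ne.symm hyz)) hxy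
      (by simp only [Sym2.map_pair_eq, hc₀, Sym2.lift_mk]; exact hk) hsub3

theorem stmt_7 {V : Type*} [Fintype V] (G : SimpleGraph V) (hG : G.Connected)
    (hn : 3 ≤ Fintype.card V) :
    rxk G 3 = 2 ↔
      Nonempty (G ≃g (completeGraph (Fin 5))) ∨
      (Fintype.card V = 4 ∧ TwoConnected G) ∨
      Fintype.card V = 3 := by
  classical
  rw [rxk_eq_two_iff G hn]
  constructor
  · rintro ⟨c, hc⟩
    have h6 : Fintype.card V ≤ 5 := by
      by_contra h
      push_neg at h
      exact no_coloring_of_complete hc h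
    have h345 : Fintype.card V = 3 ∨ Fintype.card V = 4 ∨ Fintype.card V = 5 := by omega
    rcases h345 with h3 | h4 | h5
    · exact Or.inr (Or.inr h3)
    · refine Or.inr (Or.inl ⟨h4, twoConnected_of_matching hG h4 ?_⟩)
      intro x a b hxa hxb hab hna
      exact matching_prop hc hxa hxb hab hna
    · left
      by_cases hcomp : ∀ a b : V, a ≠ b → G.Adj a b
      · have hGtop : G = ⊤ := by
          ext a b
          rw [top_adj]
          exact ⟨Adj.ne, hcomp a b⟩
        rw [hGtop]
        exact ⟨Iso.completeGraph (Fintype.equivFinOfCardEq h5)⟩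
      · exfalso
        push_neg at hcomp
        obtain ⟨a, b, hab, hnadj⟩ := hcomp
        exact no_coloring_of_nonedge hc hab hnadj (by omega)
  · rintro (he | ⟨h4, h2c⟩ | h3)
    · exact exists_coloring_K5 he.some
    · exact exists_coloring_card4 h4 (matching_of_twoConnected h4 h2c)
    · exact exists_coloring_card3 hG h3
end

section
/- Let $G$ be a connected graph and let $G'$ be a connected graph obtained from $G$ by contracting some edges of $G$. Then $rx_3(G) \leq rx_3(G') + |V(G)| - |V(G')|$. -/
open SimpleGraph

private lemma connected_delete_nonbridge {W : Type*} {Γ : SimpleGraph W} {v w : W}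
    (h : Γ.Connected) (hr : (Γ \ fromEdgeSet {s(v,w)}).Reachable v w) :
    (Γ \ fromEdgeSet {s(v,w)}).Connected := by
  have hne := h.nonempty
  refine Connected.mk fun a b => ?_
  obtain ⟨p⟩ := h.preconnected a b
  induction p with
  | nil => exact Reachable.refl _
  | cons hadj q ih =>
    refine Reachable.trans ?_ ih
    rename_i x y z
    by_cases he : s(x, y) = s(v, w)
    · rw [Sym2.eq_iff] at he
      rcases he with ⟨rfl, rfl⟩ | ⟨rfl, rfl⟩
      · exact hr
      · exact hr.symm
    · exact Adj.reachable (by simp [hadj, he])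

private lemma exists_spanning_tree {W : Type*} [Finite W] (Γ : SimpleGraph W)
    (h : Γ.Connected) : ∃ T, T ≤ Γ ∧ T.IsTree := by
  classical
  suffices H : ∀ n (Γ : SimpleGraph W), Γ.Connected → Γ.edgeSet.ncard = n →
      ∃ T, T ≤ Γ ∧ T.IsTree from H _ Γ h rfl
  intro n
  induction n using Nat.strong_induction_on with
  | _ n ih =>
    intro Γ hΓ hn
    by_cases hac : Γ.IsAcyclic
    · exact ⟨Γ, le_refl _, ⟨hΓ, hac⟩⟩
    · rw [IsAcyclic] at hac
      push_neg at hac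
      obtain ⟨v₀, c, hc⟩ := hac
      cases c with
      | nil => exact absurd rfl hc.ne_nil
      | cons hadj p =>
        rename_i m
        have he : s(v₀, m) ∈ (Walk.cons hadj p).edges := by simp
        have hkey := adj_and_reachable_delete_edges_iff_exists_cycle.mpr ⟨v₀, _, hc, he⟩
        have hconn' := connected_delete_nonbridge hΓ hkey.2
        have hes : (Γ \ fromEdgeSet {s(v₀, m)}).edgeSet = Γ.edgeSet \ {s(v₀, m)} := by
          rw [edgeSet_sdiff, edgeSet_fromEdgeSet, edgeSet_sdiff_sdiff_isDiag]
        have hlt : (Γ \ fromEdgeSet {s(v₀, m)}).edgeSet.ncard < n := by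
          rw [hes, ← hn]
          exact Set.ncard_diff_singleton_lt_of_mem (Γ.mem_edgeSet.mpr hadj) (Set.toFinite _)
        obtain ⟨T, hT, hTt⟩ := ih _ hlt _ hconn' rfl
        exact ⟨T, hT.trans sdiff_le, hTt⟩

private def graphToSubgraph {V : Type*} (G : SimpleGraph V) (s : Set V) (H : SimpleGraph s)
    (hle : ∀ a b : s, H.Adj a b → G.Adj a.1 b.1) : G.Subgraph where
  verts := s
  Adj a b := ∃ (ha : a ∈ s) (hb : b ∈ s), H.Adj ⟨a, ha⟩ ⟨b, hb⟩
  adj_sub := by rintro a b ⟨ha, hb, h⟩; exact hle _ _ h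
  edge_vert := by rintro a b ⟨ha, hb, h⟩; exact ha
  symm := ⟨by rintro a b ⟨ha, hb, h⟩; exact ⟨hb, ha, h.symm⟩⟩

private lemma coe_graphToSubgraph {V : Type*} (G : SimpleGraph V) (s : Set V)
    (H : SimpleGraph s) (hle : ∀ a b : s, H.Adj a b → G.Adj a.1 b.1) :
    (graphToSubgraph G s H hle).coe = H := by
  ext ⟨a, ha⟩ ⟨b, hb⟩
  constructor
  · rintro ⟨_, _, h⟩; exact h
  · intro h; exact ⟨ha, hb, h⟩

private lemma subgraph_spanning_tree {V : Type*} [Fintype V] {G : SimpleGraph V}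
    (H : G.Subgraph) (hc : H.Connected) :
    ∃ T : G.Subgraph, T ≤ H ∧ T.verts = H.verts ∧ T.coe.IsTree := by
  obtain ⟨T₀, hT₀le, hT₀⟩ := exists_spanning_tree H.coe hc.coe
  refine ⟨graphToSubgraph G H.verts T₀
    (fun a b h => H.coe_adj_sub a b (hT₀le h)), ⟨?_, ?_⟩, rfl, ?_⟩
  · exact subset_rfl
  · rintro a b ⟨ha, hb, h⟩
    exact hT₀le h
  · rw [coe_graphToSubgraph]; exact hT₀

private lemma mk_rainbow {V α : Type*} [Fintype V] {G : SimpleGraph V} {c : Sym2 V → α} {k : ℕ}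
    (h : ∀ S : Finset V, S.card = k →
      ∃ H : G.Subgraph, (↑S : Set V) ⊆ H.verts ∧ H.Connected ∧ Set.InjOn c H.edgeSet) :
    IsRainbowColoring G c k := by
  intro S hS
  obtain ⟨H, hSv, hconn, hinj⟩ := h S hS
  obtain ⟨T, hle, hverts, htree⟩ := subgraph_spanning_tree H hconn
  exact ⟨T, by rw [hverts]; exact hSv, htree, hinj.mono (Subgraph.edgeSet_mono hle)⟩

private lemma top_subgraph_connected {V : Type*} {G : SimpleGraph V} (h : G.Connected) :
    (⊤ : G.Subgraph).Connected := by
  have hne : Nonempty V := h.nonempty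
  haveI : Nonempty ((⊤ : G.Subgraph).verts) := ⟨⟨Classical.arbitrary V, trivial⟩⟩
  refine ⟨Connected.mk fun a b => ?_⟩
  have hr := h.preconnected a.1 b.1
  have hmap := hr.map (⟨fun v => ⟨v, trivial⟩, fun {x y} hadj => by exact hadj⟩ :
    G →g (⊤ : G.Subgraph).coe)
  exact hmap

private lemma reach_le {V : Type*} {G : SimpleGraph V} {H K : G.Subgraph} (hle : H ≤ K)
    {a b : V} (ha : a ∈ H.verts) (hb : b ∈ H.verts)
    (h : H.coe.Reachable ⟨a, ha⟩ ⟨b, hb⟩)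
    (ha' : a ∈ K.verts) (hb' : b ∈ K.verts) : K.coe.Reachable ⟨a, ha'⟩ ⟨b, hb'⟩ := by
  have := h.map (Subgraph.inclusion hle)
  exact this

private lemma edge_subsingleton {V' : Type*} [Fintype V'] (G' : SimpleGraph V')
    (h2 : Fintype.card V' ≤ 2) : G'.edgeSet.Subsingleton := by
  classical
  intro e₁ h₁ e₂ h₂'
  induction e₁ using Sym2.ind with | _ a b =>
  induction e₂ using Sym2.ind with | _ x y =>
  rw [SimpleGraph.mem_edgeSet] at h₁ h₂'
  have hab := h₁.ne
  have hxy := h₂'.ne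
  have key : ∀ z : V', z = a ∨ z = b := by
    intro z
    by_contra hz
    push_neg at hz
    have h3 : ({z, a, b} : Finset V').card = 3 := by
      rw [Finset.card_insert_of_notMem (by simp [hz.1, hz.2]),
        Finset.card_insert_of_notMem (by simp [hab]), Finset.card_singleton]
    have := Finset.card_le_univ ({z, a, b} : Finset V')
    rw [h3] at this
    omega
  rcases key x with rfl | rfl
  · rcases key y with rfl | rfl
    · exact absurd rfl hxy
    · rfl
  · rcases key y with rfl | rfl
    · rw [Sym2.eq_swap]
    · exact absurd rfl hxy

theorem stmt_9 {V V' : Type*} [Fintype V] [Fintype V']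
    (G : SimpleGraph V) (G' : SimpleGraph V') (hG : G.Connected) (hG' : G'.Connected)
    (f : V → V') (hsurj : Function.Surjective f)
    (hfib : ∀ x : V', (G.induce (f ⁻¹' {x})).Connected)
    (hadj : ∀ x y : V', G'.Adj x y ↔ x ≠ y ∧ ∃ a b : V, f a = x ∧ f b = y ∧ G.Adj a b) :
    rxk G 3 ≤ rxk G' 3 + (Fintype.card V - Fintype.card V') := by
  classical
  have hVne : Nonempty V := hG.nonempty
  -- the set of valid color counts for `G'` is nonempty
  have hne : {q | ∃ c : Sym2 V' → Fin q, IsRainbowColoring G' c 3}.Nonempty := by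
    refine ⟨Fintype.card (Sym2 V'), Fintype.equivFin (Sym2 V'), mk_rainbow ?_⟩
    intro S hS
    exact ⟨⊤, by simp [Subgraph.verts_top], top_subgraph_connected hG',
      (Fintype.equivFin (Sym2 V')).injective.injOn⟩
  set q' := sInf {q | ∃ c : Sym2 V' → Fin q, IsRainbowColoring G' c 3} with hq'
  set d := Fintype.card V - Fintype.card V' with hd
  obtain ⟨c', hc'⟩ := Nat.sInf_mem hne
  -- spanning trees of the fibers
  have htr : ∀ x : V', ∃ T : SimpleGraph (f ⁻¹' {x} : Set V),
      T ≤ G.induce (f ⁻¹' {x}) ∧ T.IsTree := fun x => exists_spanning_tree _ (hfib x)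
  choose Tr hTle hTtree using htr
  let P : V' → G.Subgraph := fun x => graphToSubgraph G (f ⁻¹' {x}) (Tr x)
    (fun a b h => by exact hTle x h)
  have hPconn : ∀ x, (P x).Connected := by
    intro x
    refine ⟨?_⟩
    rw [show (P x).coe = Tr x from coe_graphToSubgraph _ _ _ _]
    exact (hTtree x).isConnected
  let Ex : V' → Set (Sym2 V) := fun x => Sym2.map Subtype.val '' (Tr x).edgeSet
  have hPadj : ∀ x a b, (P x).Adj a b → s(a, b) ∈ Ex x := by
    rintro x a b ⟨ha, hb, h⟩
    exact ⟨s(⟨a, ha⟩, ⟨b, hb⟩), h, Sym2.map_pair_eq _ _ _⟩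
  have hExf : ∀ x a b, s(a, b) ∈ Ex x → f a = x ∧ f b = x := by
    rintro x a b ⟨e₀, he₀, hmap⟩
    induction e₀ using Sym2.ind with | _ u v =>
    rw [Sym2.map_pair_eq, Sym2.eq_iff] at hmap
    have hu : f u.1 = x := u.2
    have hv : f v.1 = x := v.2
    rcases hmap with ⟨h1, h2⟩ | ⟨h1, h2⟩
    · rw [← h1, ← h2]; exact ⟨hu, hv⟩
    · rw [← h1, ← h2]; exact ⟨hv, hu⟩
  -- the finset of all fiber-tree edges
  let FxF : V' → Finset (Sym2 V) := fun x => (Ex x).toFinset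
  let FF : Finset (Sym2 V) := Finset.univ.biUnion FxF
  have hmemFF : ∀ e, e ∈ FF ↔ ∃ x, e ∈ Ex x := by
    intro e
    simp [FF, FxF, Set.mem_toFinset]
  have hFFdisj : ∀ x ∈ Finset.univ, ∀ y ∈ Finset.univ, x ≠ y → Disjoint (FxF x) (FxF y) := by
    intro x _ y _ hxy
    rw [Finset.disjoint_left]
    intro e hex hey
    rw [Set.mem_toFinset] at hex hey
    induction e using Sym2.ind with | _ a b =>
    exact hxy ((hExf x a b hex).1.symm.trans (hExf y a b hey).1)
  have hcardFx : ∀ x, (FxF x).card + 1 = Fintype.card (f ⁻¹' {x} : Set V) := by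
    intro x
    have h1 : (FxF x).card = (Ex x).ncard := (Set.ncard_eq_toFinset_card' _).symm
    have h2 : (Ex x).ncard = (Tr x).edgeSet.ncard :=
      Set.ncard_image_of_injective _ (Sym2.map.injective Subtype.val_injective)
    have h3 : (Tr x).edgeSet.ncard = (Tr x).edgeFinset.card := Set.ncard_eq_toFinset_card' _
    rw [h1, h2, h3]
    exact (hTtree x).card_edgeFinset
  have hfibcard : ∀ x : V', Fintype.card (f ⁻¹' {x} : Set V) =
      (Finset.univ.filter fun a => f a = x).card := by
    intro x
    rw [← Fintype.card_subtype]
    exact Fintype.card_congr (Equiv.subtypeEquivRight fun a => by simp)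
  have hsumfib : ∑ x : V', Fintype.card (f ⁻¹' {x} : Set V) = Fintype.card V := by
    rw [← Finset.card_univ,
      Finset.card_eq_sum_card_fiberwise (f := f) (fun a _ => Finset.mem_univ (f a))]
    exact Finset.sum_congr rfl fun x _ => hfibcard x
  have hFFcard : FF.card + Fintype.card V' = Fintype.card V := by
    rw [show FF.card = ∑ x : V', (FxF x).card from Finset.card_biUnion hFFdisj]
    calc (∑ x : V', (FxF x).card) + Fintype.card V'
        = ∑ x : V', ((FxF x).card + 1) := by
          rw [Finset.sum_add_distrib, Finset.sum_const, Finset.card_univ, smul_eq_mul, mul_one]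
      _ = ∑ x : V', Fintype.card (f ⁻¹' {x} : Set V) :=
          Finset.sum_congr rfl fun x _ => hcardFx x
      _ = Fintype.card V := hsumfib
  have hFFle : FF.card ≤ d := by omega
  -- injection of fiber-tree edges into `Fin d`
  let ι : ↥FF → Fin d := fun e =>
    Fin.castLE (by rw [Fintype.card_coe]; exact hFFle) (Fintype.equivFin ↥FF e)
  have hι : Function.Injective ι := fun e₁ e₂ h =>
    (Fintype.equivFin ↥FF).injective (Fin.castLE_injective _ h)
  -- lifts of edges of G'
  have hlift : ∀ e' : Sym2 V', ∃ a b : V, e' ∈ G'.edgeSet → G.Adj a b ∧ s(f a, f b) = e' := by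
    intro e'
    induction e' using Sym2.ind with | _ x y =>
    by_cases he' : s(x, y) ∈ G'.edgeSet
    · rw [SimpleGraph.mem_edgeSet] at he'
      obtain ⟨-, a, b, hfa, hfb, hab⟩ := (hadj x y).mp he'
      exact ⟨a, b, fun _ => ⟨hab, by rw [hfa, hfb]⟩⟩
    · exact ⟨Classical.arbitrary V, Classical.arbitrary V, fun h => absurd h he'⟩
  choose u₁ u₂ hu using hlift
  have hcross_ne : ∀ e' ∈ G'.edgeSet, s(u₁ e', u₂ e') ∉ FF := by
    intro e' he' hmem
    rw [hmemFF] at hmem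
    obtain ⟨x, hx⟩ := hmem
    obtain ⟨hx1, hx2⟩ := hExf x _ _ hx
    have hdiag : e'.IsDiag := by
      rw [← (hu e' he').2, hx1, hx2]
      exact Sym2.mk_isDiag_iff.mpr rfl
    exact G'.not_isDiag_of_mem_edgeSet he' hdiag
  -- the coloring
  let c₀ : Sym2 V → (Fin q' ⊕ Fin d) := fun e =>
    if h : e ∈ FF then Sum.inr (ι ⟨e, h⟩) else Sum.inl (c' (Sym2.map f e))
  let c₂ : Sym2 V → Fin (q' + d) := fun e => finSumFinEquiv (c₀ e)
  have hmain : IsRainbowColoring G c₂ 3 := by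
    apply mk_rainbow
    intro S hS
    -- choose a connected rainbow subgraph of G' containing the image of S
    obtain ⟨H', hSv, hH'conn, hH'inj⟩ : ∃ H' : G'.Subgraph, (∀ a ∈ S, f a ∈ H'.verts) ∧
        H'.Connected ∧ Set.InjOn c' H'.edgeSet := by
      by_cases h3 : 3 ≤ Fintype.card V'
      · obtain ⟨S'', hsub, -, hcard⟩ := Finset.exists_subsuperset_card_eq
          (Finset.subset_univ (S.image f))
          (le_trans Finset.card_image_le (le_of_eq hS)) (by rwa [Finset.card_univ])
        obtain ⟨T', hT'v, hT't, hT'inj⟩ := hc' S'' hcard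
        exact ⟨T', fun a ha => hT'v (hsub (Finset.mem_image_of_mem f ha)),
          ⟨hT't.isConnected⟩, hT'inj⟩
      · refine ⟨⊤, fun a _ => by simp [Subgraph.verts_top], top_subgraph_connected hG', ?_⟩
        rw [Subgraph.edgeSet_top]
        exact (edge_subsingleton G' (by omega)).injOn _
    -- build the lifted connected subgraph of G
    let Q : {e' // e' ∈ H'.edgeSet} → G.Subgraph := fun e' =>
      G.subgraphOfAdj (hu e'.1 (H'.edgeSet_subset e'.2)).1
    let Hsub : G.Subgraph := (⨆ x : H'.verts, P x.1) ⊔ (⨆ e', Q e')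
    have hPle : ∀ x : H'.verts, P x.1 ≤ Hsub := fun x => le_trans (le_iSup (fun x : H'.verts => P x.1) x) le_sup_left
    have hQle : ∀ e', Q e' ≤ Hsub := fun e' => le_trans (le_iSup Q e') le_sup_right
    have hfibverts : ∀ a : V, f a ∈ H'.verts → a ∈ Hsub.verts := fun a ha =>
      (hPle ⟨f a, ha⟩).1 (Set.mem_preimage.mpr rfl)
    have hvertsf : ∀ a ∈ Hsub.verts, f a ∈ H'.verts := by
      intro a ha
      rw [show Hsub.verts = (⨆ x : H'.verts, P x.1).verts ∪ (⨆ e', Q e').verts from rfl] at ha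
      rcases ha with ha | ha
      · rw [Subgraph.verts_iSup] at ha
        obtain ⟨x, hx⟩ := Set.mem_iUnion.mp ha
        have : f a = x.1 := hx
        rw [this]; exact x.2
      · rw [Subgraph.verts_iSup] at ha
        obtain ⟨e', he'⟩ := Set.mem_iUnion.mp ha
        have hadj' : H'.Adj (f (u₁ e'.1)) (f (u₂ e'.1)) := by
          rw [← Subgraph.mem_edgeSet, (hu e'.1 (H'.edgeSet_subset e'.2)).2]
          exact e'.2
        rcases he' with rfl | he''
        · exact hadj'.fst_mem
        · rw [Set.mem_singleton_iff] at he''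
          rw [he'']
          exact hadj'.snd_mem
    have R1 : ∀ (a b : V) (hfab : f a = f b) (hfa : f a ∈ H'.verts)
        (ha : a ∈ Hsub.verts) (hb : b ∈ Hsub.verts),
        Hsub.coe.Reachable ⟨a, ha⟩ ⟨b, hb⟩ := by
      intro a b hfab hfa ha hb
      have hamem : a ∈ (P (f a)).verts := Set.mem_preimage.mpr rfl
      have hbmem : b ∈ (P (f a)).verts := Set.mem_preimage.mpr hfab.symm
      exact reach_le (hPle ⟨f a, hfa⟩) hamem hbmem
        ((hPconn (f a)) ⟨a, hamem⟩ ⟨b, hbmem⟩) ha hb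
    have main : ∀ (u v : ↥H'.verts) (w : H'.coe.Walk u v) (a b : V)
        (ha : a ∈ Hsub.verts) (hb : b ∈ Hsub.verts), f a = u.1 → f b = v.1 →
        Hsub.coe.Reachable ⟨a, ha⟩ ⟨b, hb⟩ := by
      intro u v w
      induction w with
      | nil =>
        intro a b ha hb hfa hfb
        exact R1 a b (by rw [hfa, hfb]) (by rw [hfa]; exact Subtype.coe_prop _) ha hb
      | cons hstep w' ih =>
        rename_i x m z
        intro a b ha hb hfa hfb
        have he' : s(x.1, m.1) ∈ H'.edgeSet := Subgraph.mem_edgeSet.mpr hstep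
        obtain ⟨hABadj, hABmap⟩ := hu s(x.1, m.1) (H'.edgeSet_subset he')
        have hQle' : G.subgraphOfAdj hABadj ≤ Hsub := hQle ⟨s(x.1, m.1), he'⟩
        have hAv : u₁ s(x.1, m.1) ∈ Hsub.verts :=
          hQle'.1 (by simp)
        have hBv : u₂ s(x.1, m.1) ∈ Hsub.verts :=
          hQle'.1 (by simp)
        have hadjH : Hsub.Adj (u₁ s(x.1, m.1)) (u₂ s(x.1, m.1)) :=
          hQle'.2 (by simp)
        have hstepR : Hsub.coe.Reachable ⟨u₁ s(x.1, m.1), hAv⟩ ⟨u₂ s(x.1, m.1), hBv⟩ :=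
          SimpleGraph.Adj.reachable (by exact hadjH)
        rcases Sym2.eq_iff.mp hABmap with ⟨h1, h2⟩ | ⟨h1, h2⟩
        · exact ((R1 a _ (hfa.trans h1.symm) (by rw [hfa]; exact Subtype.coe_prop _) ha hAv).trans
            hstepR).trans (ih _ b hBv hb h2 hfb)
        · exact ((R1 a _ (hfa.trans h2.symm) (by rw [hfa]; exact Subtype.coe_prop _) ha hBv).trans
            hstepR.symm).trans (ih _ b hAv hb h1 hfb)
    have hSne : S.Nonempty := by rw [← Finset.card_pos, hS]; norm_num
    obtain ⟨a₀, ha₀⟩ := hSne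
    haveI : Nonempty ↥Hsub.verts := ⟨⟨a₀, hfibverts a₀ (hSv a₀ ha₀)⟩⟩
    have hconnH : Hsub.Connected := by
      refine ⟨SimpleGraph.Connected.mk ?_⟩
      rintro ⟨a, ha⟩ ⟨b, hb⟩
      obtain ⟨w⟩ := hH'conn ⟨f a, hvertsf a ha⟩ ⟨f b, hvertsf b hb⟩
      exact main _ _ w a b ha hb rfl rfl
    have hedges : Hsub.edgeSet ⊆
        (↑FF : Set (Sym2 V)) ∪ (fun e' => s(u₁ e', u₂ e')) '' H'.edgeSet := by
      intro e he
      induction e using Sym2.ind with | _ a b =>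
      rw [Subgraph.mem_edgeSet] at he
      rcases (Subgraph.sup_adj).mp he with h | h
      · obtain ⟨x, hx⟩ := Subgraph.iSup_adj.mp h
        exact Or.inl (by rw [Finset.mem_coe, hmemFF]; exact ⟨x.1, hPadj x.1 a b hx⟩)
      · obtain ⟨e', he'⟩ := Subgraph.iSup_adj.mp h
        have he2 : (G.subgraphOfAdj (hu e'.1 (H'.edgeSet_subset e'.2)).1).Adj a b := he'
        have : s(u₁ e'.1, u₂ e'.1) = s(a, b) := by simpa using he2
        exact Or.inr ⟨e'.1, e'.2, this⟩
    have hinjU : Set.InjOn c₀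
        ((↑FF : Set (Sym2 V)) ∪ (fun e' => s(u₁ e', u₂ e')) '' H'.edgeSet) := by
      have hc₀F : ∀ e (h : e ∈ FF), c₀ e = Sum.inr (ι ⟨e, h⟩) := fun e h => dif_pos h
      have hc₀X : ∀ e' ∈ H'.edgeSet, c₀ s(u₁ e', u₂ e') = Sum.inl (c' e') := by
        intro e' he'
        have hg := H'.edgeSet_subset he'
        have : c₀ s(u₁ e', u₂ e') = Sum.inl (c' (Sym2.map f s(u₁ e', u₂ e'))) :=
          dif_neg (hcross_ne e' hg)
        rw [this, Sym2.map_pair_eq, (hu e' hg).2]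
      rintro e₁ (h₁ | ⟨e₁', he₁', rfl⟩) e₂ (h₂ | ⟨e₂', he₂', rfl⟩) heq
      · rw [hc₀F e₁ h₁, hc₀F e₂ h₂] at heq
        exact congrArg Subtype.val (hι (Sum.inr.inj heq))
      · rw [hc₀F e₁ h₁, hc₀X e₂' he₂'] at heq
        exact absurd heq (by simp)
      · rw [hc₀X e₁' he₁', hc₀F e₂ h₂] at heq
        exact absurd heq (by simp)
      · rw [hc₀X e₁' he₁', hc₀X e₂' he₂'] at heq
        rw [hH'inj he₁' he₂' (Sum.inl.inj heq)]
    refine ⟨Hsub, ?_, hconnH, ?_⟩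
    · intro a ha
      exact hfibverts a (hSv a ha)
    · intro e₁ h₁ e₂ h₂ heq
      exact hinjU.mono hedges h₁ h₂ (finSumFinEquiv.injective heq)
  have hfin : (q' + d) ∈ {q | ∃ c : Sym2 V → Fin q, IsRainbowColoring G c 3} := ⟨c₂, hmain⟩
  exact Nat.sInf_le hfin
end

section
/- The graph $K_5 - e$ (the complete graph on 5 vertices minus one edge) satisfies $rx_3(K_5 - e) = 3$. -/
open SimpleGraph

/-- `K₅ - e`: the complete graph on 5 vertices minus one edge. -/
def K5MinusE : SimpleGraph (Fin 5) :=
  (completeGraph (Fin 5)).deleteEdges {s(0, 1)}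

lemma K5_adj (x y : Fin 5) : K5MinusE.Adj x y ↔ x ≠ y ∧ ¬(s(x,y) = s(0,1)) := by
  simp [K5MinusE, completeGraph]

instance : DecidableRel K5MinusE.Adj := fun x y => decidable_of_iff _ (K5_adj x y).symm

/-! ### Upper bound -/

/-- An explicit rainbow coloring of `K₅ - e` with 3 colors. -/
def c0 : Sym2 (Fin 5) → Fin 3 :=
  Sym2.lift ⟨fun i j => ![![0,0,0,1,2], ![0,0,1,2,0], ![0,1,0,0,1], ![1,2,0,0,2],
    ![2,0,1,2,0]] i j, by decide⟩

lemma path2_tree {α : Type*} {c : Sym2 (Fin 5) → α} (S : Finset (Fin 5)) (a b d : Fin 5)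
    (hS : ∀ x ∈ S, x = a ∨ x = b ∨ x = d)
    (hab : K5MinusE.Adj a b) (hbd : K5MinusE.Adj b d) (had : a ≠ d)
    (hc : c s(a,b) ≠ c s(b,d)) :
    ∃ T : K5MinusE.Subgraph, (↑S : Set (Fin 5)) ⊆ T.verts ∧
      T.coe.IsTree ∧ Set.InjOn c T.edgeSet := by
  classical
  have hab' : a ≠ b := hab.ne
  have hbd' : b ≠ d := hbd.ne
  let T : K5MinusE.Subgraph :=
    { verts := {a, b, d}
      Adj := fun u v => s(u,v) = s(a,b) ∨ s(u,v) = s(b,d)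
      adj_sub := by
        rintro u v (h | h) <;> rw [Sym2.eq_iff] at h <;>
          rcases h with ⟨rfl, rfl⟩ | ⟨rfl, rfl⟩
        exacts [hab, hab.symm, hbd, hbd.symm]
      edge_vert := by
        rintro u v (h | h) <;> rw [Sym2.eq_iff] at h <;>
          rcases h with ⟨rfl, rfl⟩ | ⟨rfl, rfl⟩ <;> simp
      symm := by
        refine ⟨fun u v h => ?_⟩
        rwa [Sym2.eq_swap] at h }
  have hedge : ∀ e ∈ T.edgeSet, e = s(a,b) ∨ e = s(b,d) := by
    intro e he
    induction e using Sym2.ind with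
    | _ u v => exact he
  refine ⟨T, ?_, ?_, ?_⟩
  · intro x hx
    rcases hS x (by simpa using hx) with rfl | rfl | rfl <;> simp [T]
  · constructor
    · have key : ∀ u, T.coe.Reachable u ⟨b, by simp [T]⟩ := by
        rintro ⟨u, hu⟩
        have hu' : u = a ∨ u = b ∨ u = d := by simpa [T] using hu
        rcases hu' with rfl | rfl | rfl
        · exact Adj.reachable (Or.inl rfl)
        · exact Reachable.refl _
        · exact Adj.reachable (Or.inr (by rw [Sym2.eq_swap]))
      haveI : Nonempty ↑T.verts := ⟨⟨b, by simp [T]⟩⟩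
      exact ⟨fun u v => (key u).trans (key v).symm⟩
    · intro v p hp
      have h3 := hp.three_le_length
      have hnd : (p.edges.map (Sym2.map (Subtype.val))).Nodup :=
        hp.edges_nodup.map (Sym2.map.injective Subtype.val_injective)
      have hsub : ∀ e ∈ p.edges.map (Sym2.map (Subtype.val)),
          e ∈ ({s(a,b), s(b,d)} : Finset (Sym2 (Fin 5))) := by
        intro e he
        rw [List.mem_map] at he
        obtain ⟨e', he', rfl⟩ := he
        have h1 := p.edges_subset_edgeSet he'
        rw [Subgraph.edgeSet_coe, Set.mem_preimage] at h1
        rcases hedge _ h1 with h | h <;> simp [h]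
      have hcard : (p.edges.map (Sym2.map (Subtype.val))).toFinset.card ≤ 2 := by
        refine le_trans (Finset.card_le_card (fun e he => hsub e (List.mem_toFinset.mp he))) ?_
        exact le_trans (Finset.card_insert_le _ _) (by simp)
      rw [List.toFinset_card_of_nodup hnd, List.length_map, Walk.length_edges] at hcard
      omega
  · intro x hx y hy hxy
    rcases hedge _ hx with rfl | rfl <;> rcases hedge _ hy with rfl | rfl <;>
      first | rfl | exact absurd hxy (by simpa using hc) | exact absurd hxy.symm (by simpa using hc)

lemma upper : IsRainbowColoring K5MinusE c0 3 := by
  intro S hS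
  have hS' : S ∈ (Finset.univ.filter (fun s : Finset (Fin 5) => s.card = 3)) := by
    simp [hS]
  fin_cases hS' <;>
    first
      | exact path2_tree _ 0 2 1 (by decide) (by decide) (by decide) (by decide) (by decide)
      | exact path2_tree _ 0 3 1 (by decide) (by decide) (by decide) (by decide) (by decide)
      | exact path2_tree _ 0 4 1 (by decide) (by decide) (by decide) (by decide) (by decide)
      | exact path2_tree _ 2 0 3 (by decide) (by decide) (by decide) (by decide) (by decide)
      | exact path2_tree _ 2 0 4 (by decide) (by decide) (by decide) (by decide) (by decide)
      | exact path2_tree _ 3 0 4 (by decide) (by decide) (by decide) (by decide) (by decide)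
      | exact path2_tree _ 2 1 3 (by decide) (by decide) (by decide) (by decide) (by decide)
      | exact path2_tree _ 2 1 4 (by decide) (by decide) (by decide) (by decide) (by decide)
      | exact path2_tree _ 3 1 4 (by decide) (by decide) (by decide) (by decide) (by decide)
      | exact path2_tree _ 3 2 4 (by decide) (by decide) (by decide) (by decide) (by decide)

/-! ### Lower bound -/

lemma two_edges {c : Sym2 (Fin 5) → Fin 2} (h : IsRainbowColoring K5MinusE c 3)
    (S : Finset (Fin 5)) (hS : S.card = 3) :
    ∃ e1 e2 : Sym2 (Fin 5), e1 ∈ K5MinusE.edgeSet ∧ e2 ∈ K5MinusE.edgeSet ∧ e1 ≠ e2 ∧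
      (∀ v ∈ e1, v ∈ S) ∧ (∀ v ∈ e2, v ∈ S) ∧ c e1 ≠ c e2 := by
  classical
  obtain ⟨T, hsub, htree, hinj⟩ := h S hS
  letI : Fintype ↥T.verts := Set.Finite.fintype (Set.toFinite _)
  letI : Fintype ↥T.coe.edgeSet := Set.Finite.fintype (Set.toFinite _)
  have hcount := htree.card_edgeFinset
  have hle : T.coe.edgeFinset.card ≤ 2 := by
    have : T.coe.edgeFinset.card ≤ (Finset.univ : Finset (Fin 2)).card := by
      refine Finset.card_le_card_of_injOn (fun e => c (Sym2.map Subtype.val e))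
        (fun _ _ => Finset.mem_univ _) ?_
      intro e1 he1 e2 he2 hce
      have m1 : Sym2.map Subtype.val e1 ∈ T.edgeSet := by
        have := mem_edgeFinset.mp he1
        rwa [Subgraph.edgeSet_coe, Set.mem_preimage] at this
      have m2 : Sym2.map Subtype.val e2 ∈ T.edgeSet := by
        have := mem_edgeFinset.mp he2
        rwa [Subgraph.edgeSet_coe, Set.mem_preimage] at this
      exact Sym2.map.injective Subtype.val_injective (hinj m1 m2 hce)
    simpa using this
  have hverts3 : Fintype.card ↥T.verts = 3 := by
    have hge : 3 ≤ Fintype.card ↥T.verts := by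
      rw [← hS]
      have : S ⊆ T.verts.toFinset := fun x hx => Set.mem_toFinset.mpr (hsub hx)
      calc S.card ≤ T.verts.toFinset.card := Finset.card_le_card this
        _ = Fintype.card ↥T.verts := Set.toFinset_card _
    omega
  have hvertsS : T.verts = ↑S := by
    have h1 : S ⊆ T.verts.toFinset := fun x hx => Set.mem_toFinset.mpr (hsub hx)
    have h2 : T.verts.toFinset = S := by
      refine (Finset.eq_of_subset_of_card_le h1 ?_).symm
      rw [Set.toFinset_card, hverts3, hS]
    rw [← h2]; simp
  have h1lt : 1 < T.coe.edgeFinset.card := by omega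
  obtain ⟨e1', he1', e2', he2', hne'⟩ := Finset.one_lt_card.mp h1lt
  have m1 : Sym2.map Subtype.val e1' ∈ T.edgeSet := by
    have := mem_edgeFinset.mp he1'
    rwa [Subgraph.edgeSet_coe, Set.mem_preimage] at this
  have m2 : Sym2.map Subtype.val e2' ∈ T.edgeSet := by
    have := mem_edgeFinset.mp he2'
    rwa [Subgraph.edgeSet_coe, Set.mem_preimage] at this
  refine ⟨_, _, T.edgeSet_subset m1, T.edgeSet_subset m2,
    fun hEq => hne' (Sym2.map.injective Subtype.val_injective hEq), ?_, ?_, ?_⟩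
  · intro v hv
    have := Subgraph.mem_verts_of_mem_edge m1 hv
    rwa [hvertsS, Finset.mem_coe] at this
  · intro v hv
    have := Subgraph.mem_verts_of_mem_edge m2 hv
    rwa [hvertsS, Finset.mem_coe] at this
  · intro hce
    exact hne' (Sym2.map.injective Subtype.val_injective (hinj m1 m2 hce))

lemma edge_in_triple {e : Sym2 (Fin 5)} {x y z : Fin 5} (he : e ∈ K5MinusE.edgeSet)
    (hv : ∀ v ∈ e, v ∈ ({x, y, z} : Finset (Fin 5))) :
    e = s(x,y) ∨ e = s(x,z) ∨ e = s(y,z) := by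
  induction e using Sym2.ind with
  | _ u w =>
    have hne : u ≠ w := (K5MinusE.ne_of_adj ((mem_edgeSet K5MinusE).mp he))
    have hu := hv u (Sym2.mem_mk_left u w)
    have hw := hv w (Sym2.mem_mk_right u w)
    simp only [Finset.mem_insert, Finset.mem_singleton] at hu hw
    rcases hu with rfl | rfl | rfl <;> rcases hw with rfl | rfl | rfl <;>
      first
        | exact absurd rfl hne
        | (left; rfl)
        | (right; left; rfl)
        | (right; right; rfl)
        | (left; exact Sym2.eq_swap)
        | (right; left; exact Sym2.eq_swap)
        | (right; right; exact Sym2.eq_swap)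

lemma not01 : ¬ (s(0,1) : Sym2 (Fin 5)) ∈ K5MinusE.edgeSet := by
  rw [mem_edgeSet]
  decide

lemma constrA {c : Sym2 (Fin 5) → Fin 2} (h : IsRainbowColoring K5MinusE c 3) (x : Fin 5)
    (h0 : K5MinusE.Adj 0 x) (h1 : K5MinusE.Adj 1 x) :
    c s(0,x) ≠ c s(1,x) := by
  have hcard : ({0, 1, x} : Finset (Fin 5)).card = 3 := by
    rw [Finset.card_eq_three]
    exact ⟨0, 1, x, by decide, h0.ne, h1.ne, rfl⟩
  obtain ⟨e1, e2, he1, he2, hne, hv1, hv2, hc⟩ := two_edges h _ hcard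
  have c1 := edge_in_triple he1 hv1
  have c2 := edge_in_triple he2 hv2
  rcases c1 with rfl | rfl | rfl
  · exact absurd he1 not01
  all_goals rcases c2 with rfl | rfl | rfl
  · exact absurd he2 not01
  · exact absurd rfl hne
  · exact hc
  · exact absurd he2 not01
  · exact fun hq => hc hq.symm
  · exact absurd rfl hne

lemma constrB {c : Sym2 (Fin 5) → Fin 2} (h : IsRainbowColoring K5MinusE c 3) (i x y : Fin 5)
    (hix : K5MinusE.Adj i x) (hiy : K5MinusE.Adj i y) (hxy : K5MinusE.Adj x y) :
    c s(i,x) ≠ c s(i,y) ∨ c s(i,x) ≠ c s(x,y) ∨ c s(i,y) ≠ c s(x,y) := by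
  have hcard : ({i, x, y} : Finset (Fin 5)).card = 3 := by
    rw [Finset.card_eq_three]
    exact ⟨i, x, y, hix.ne, hiy.ne, hxy.ne, rfl⟩
  obtain ⟨e1, e2, he1, he2, hne, hv1, hv2, hc⟩ := two_edges h _ hcard
  have c1 := edge_in_triple he1 hv1
  have c2 := edge_in_triple he2 hv2
  rcases c1 with rfl | rfl | rfl <;> rcases c2 with rfl | rfl | rfl <;>
    first
      | exact absurd rfl hne
      | exact Or.inl hc
      | exact Or.inl (fun hq => hc hq.symm)
      | exact Or.inr (Or.inl hc)
      | exact Or.inr (Or.inl (fun hq => hc hq.symm))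
      | exact Or.inr (Or.inr hc)
      | exact Or.inr (Or.inr (fun hq => hc hq.symm))

lemma lower (c : Sym2 (Fin 5) → Fin 2) (h : IsRainbowColoring K5MinusE c 3) : False := by
  have A2 := constrA h 2 (by decide) (by decide)
  have A3 := constrA h 3 (by decide) (by decide)
  have A4 := constrA h 4 (by decide) (by decide)
  have B023 := constrB h 0 2 3 (by decide) (by decide) (by decide)
  have B024 := constrB h 0 2 4 (by decide) (by decide) (by decide)
  have B034 := constrB h 0 3 4 (by decide) (by decide) (by decide)
  have B123 := constrB h 1 2 3 (by decide) (by decide) (by decide)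
  have B124 := constrB h 1 2 4 (by decide) (by decide) (by decide)
  have B134 := constrB h 1 3 4 (by decide) (by decide) (by decide)
  revert A2 A3 A4 B023 B024 B034 B123 B124 B134
  generalize c s(0,2) = a02
  generalize c s(0,3) = a03
  generalize c s(0,4) = a04
  generalize c s(1,2) = a12
  generalize c s(1,3) = a13
  generalize c s(1,4) = a14
  generalize c s(2,3) = a23
  generalize c s(2,4) = a24
  generalize c s(3,4) = a34
  revert a02 a03 a04 a12 a13 a14 a23 a24 a34
  decide

/-! ### Main theorem -/

theorem stmt_15 : rxk K5MinusE 3 = 3 := by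
  have hmem : 3 ∈ {q | ∃ c : Sym2 (Fin 5) → Fin q, IsRainbowColoring K5MinusE c 3} :=
    ⟨c0, upper⟩
  refine le_antisymm (Nat.sInf_le hmem) ?_
  refine le_csInf ⟨3, hmem⟩ ?_
  rintro q ⟨c, hc⟩
  by_contra hq
  push_neg at hq
  have hq2 : q ≤ 2 := by omega
  refine lower (fun e => Fin.castLE hq2 (c e)) ?_
  intro S hS
  obtain ⟨T, h1, h2, h3⟩ := hc S hS
  exact ⟨T, h1, h2, fun e1 he1 e2 he2 hce =>
    h3 he1 he2 (Fin.castLE_injective hq2 hce)⟩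
end
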